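/- There exists a polynomial P ∈ ℝ[X_1,...,X_p] of degree 4p with nonnegative coefficients (one can take P(X) = 5^p(1 + 4(X_1+...+X_p)^4)^p) such that for any k ∈ ℤ^n and l = (l_1,...,l_p) ∈ (ℤ^n)^p with k ≠ 0 and k ≠ -(l_1+...+l_i) for all 1 ≤ i ≤ p, one has 1/(|k+ĺ_1|²⋯|k+ĺ_p|²) ≤ |k|^{-2p}·P(|l_1|,...,|l_p|), where ĺ_i := l_1+...+l_i. -/

import Mathlib

open scoped BigOperators

/-- Euclidean norm of an integer vector. -/
noncomputable def znorm {n : ℕ} (k : Fin n → ℤ) : ℝ :=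
  Real.sqrt (∑ i, ((k i : ℝ)) ^ 2)

lemma znorm_nonneg {n : ℕ} (k : Fin n → ℤ) : 0 ≤ znorm k := Real.sqrt_nonneg _

lemma znorm_sq {n : ℕ} (k : Fin n → ℤ) : znorm k ^ 2 = ∑ i, ((k i : ℝ)) ^ 2 := by
  rw [znorm, Real.sq_sqrt]
  positivity

lemma znorm_neg {n : ℕ} (k : Fin n → ℤ) : znorm (-k) = znorm k := by
  simp [znorm]

lemma znorm_eq_norm {n : ℕ} (c : Fin n → ℤ) :
    znorm c = ‖(WithLp.equiv 2 (Fin n → ℝ)).symm (fun i => (c i : ℝ))‖ := by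
  rw [EuclideanSpace.norm_eq, znorm]
  congr 1
  refine Finset.sum_congr rfl fun i _ => ?_
  simp [Real.norm_eq_abs, sq_abs]

lemma znorm_add_le {n : ℕ} (a b : Fin n → ℤ) : znorm (a + b) ≤ znorm a + znorm b := by
  rw [znorm_eq_norm a, znorm_eq_norm b, znorm_eq_norm (a + b)]
  have h : (fun i => (((a + b) i : ℤ) : ℝ)) = (fun i => ((a i : ℝ))) + fun i => ((b i : ℝ)) := by
    funext i
    simp [Pi.add_apply]
  rw [h]
  exact norm_add_le ((WithLp.equiv 2 (Fin n → ℝ)).symm (fun i => (a i : ℝ)))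
    ((WithLp.equiv 2 (Fin n → ℝ)).symm (fun i => (b i : ℝ)))

lemma znorm_sum_le {n : ℕ} {ι : Type*} (s : Finset ι) (l : ι → Fin n → ℤ) :
    znorm (∑ j ∈ s, l j) ≤ ∑ j ∈ s, znorm (l j) := by
  classical
  induction s using Finset.induction with
  | empty => simp [znorm]
  | @insert a s hx ih =>
    rw [Finset.sum_insert hx, Finset.sum_insert hx]
    exact (znorm_add_le _ _).trans (by linarith)

lemma one_le_znorm_sq {n : ℕ} {k : Fin n → ℤ} (hk : k ≠ 0) : 1 ≤ znorm k ^ 2 := by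
  rw [znorm_sq]
  obtain ⟨i, hi⟩ : ∃ i, k i ≠ 0 := by
    by_contra h
    push_neg at h
    exact hk (funext h)
  have h1 : (1 : ℝ) ≤ ((k i : ℝ)) ^ 2 := by
    have := Int.one_le_abs hi
    have h2 : (1:ℤ) ≤ (k i)^2 := by nlinarith [sq_abs (k i)]
    exact_mod_cast h2
  calc (1 : ℝ) ≤ ((k i : ℝ)) ^ 2 := h1
    _ ≤ ∑ j, ((k j : ℝ)) ^ 2 :=
        Finset.single_le_sum (f := fun j => ((k j : ℝ)) ^ 2)
          (fun j _ => by positivity) (Finset.mem_univ i)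

lemma one_le_znorm {n : ℕ} {k : Fin n → ℤ} (hk : k ≠ 0) : 1 ≤ znorm k := by
  nlinarith [one_le_znorm_sq hk, znorm_nonneg k]

lemma coeff_nonneg_pow {p : ℕ} (f : MvPolynomial (Fin p) ℝ) (hf : ∀ m, 0 ≤ f.coeff m) (N : ℕ) :
    ∀ m, 0 ≤ (f ^ N).coeff m := by
  induction N with
  | zero => intro m; rw [pow_zero, MvPolynomial.coeff_one]; positivity
  | succ N ih =>
    intro m
    rw [pow_succ, MvPolynomial.coeff_mul]
    exact Finset.sum_nonneg fun x _ => mul_nonneg (ih x.1) (hf x.2)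

lemma aux_hE (p : ℕ) (S : ℝ) (hS0 : 0 ≤ S) :
    (1 + S) ^ (2 * p) ≤ 4^p + 4^p * S ^ (4 * p) := by
  rcases le_total S 1 with hs | hs
  · have h1 : (1 + S) ^ (2 * p) ≤ (4:ℝ) ^ p := by
      have heq : (1 + S) ^ (2 * p) = ((1 + S) ^ 2) ^ p := by rw [← pow_mul]
      rw [heq]
      exact pow_le_pow_left₀ (by positivity) (by nlinarith) p
    have h2 : (0:ℝ) ≤ 4^p * S ^ (4 * p) := by positivity
    linarith
  · have h1 : (1 + S) ^ (2 * p) ≤ (4:ℝ)^p * S ^ (2 * p) := by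
      have heq : (1 + S) ^ (2 * p) = ((1 + S) ^ 2) ^ p := by rw [← pow_mul]
      have heq2 : (4:ℝ)^p * S ^ (2 * p) = (4 * S ^ 2) ^ p := by
        rw [mul_pow, ← pow_mul]
      rw [heq, heq2]
      exact pow_le_pow_left₀ (by positivity) (by nlinarith) p
    have h2 : S ^ (2 * p) ≤ S ^ (4 * p) := pow_le_pow_right₀ hs (by omega)
    have h3 : (0:ℝ) < (4:ℝ)^p := by positivity
    nlinarith

theorem stmt8 (p : ℕ) :
    ∃ P : MvPolynomial (Fin p) ℝ,
      P.totalDegree = 4 * p ∧ (∀ m, 0 ≤ P.coeff m) ∧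
      ∀ (n : ℕ) (k : Fin n → ℤ) (l : Fin p → Fin n → ℤ),
        k ≠ 0 → (∀ i : Fin p, k ≠ -(∑ j ∈ Finset.Iic i, l j)) →
        (∏ i : Fin p, znorm (k + ∑ j ∈ Finset.Iic i, l j) ^ 2)⁻¹
          ≤ (znorm k ^ (2 * p))⁻¹ * MvPolynomial.eval (fun i => znorm (l i)) P := by
  classical
  refine ⟨MvPolynomial.C ((4:ℝ)^p) + MvPolynomial.C ((4:ℝ)^p) *
      (∑ i, MvPolynomial.X i) ^ (4 * p), ?_, ?_, ?_⟩
  · -- total degree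
    rcases Nat.eq_zero_or_pos p with hp | hp
    · subst hp
      have h2 : (MvPolynomial.C ((4:ℝ)^0) + MvPolynomial.C ((4:ℝ)^0) *
          (∑ i : Fin 0, MvPolynomial.X i) ^ (4 * 0) : MvPolynomial (Fin 0) ℝ)
          = MvPolynomial.C 2 := by
        rw [show ((2:ℝ)) = 1 + 1 by norm_num, map_add]
        simp
      rw [h2, MvPolynomial.totalDegree_C]
    · have h1 : ((∑ i, MvPolynomial.X i : MvPolynomial (Fin p) ℝ)).IsHomogeneous 1 :=
        MvPolynomial.IsHomogeneous.sum _ _ _ fun i _ => MvPolynomial.isHomogeneous_X _ _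
      have hhom : (MvPolynomial.C ((4:ℝ)^p) * (∑ i, MvPolynomial.X i) ^ (4 * p) :
          MvPolynomial (Fin p) ℝ).IsHomogeneous (4 * p) := by
        simpa using (MvPolynomial.isHomogeneous_C (Fin p) ((4:ℝ)^p)).mul (h1.pow (4 * p))
      have hne : (MvPolynomial.C ((4:ℝ)^p) * (∑ i, MvPolynomial.X i) ^ (4 * p) :
          MvPolynomial (Fin p) ℝ) ≠ 0 := by
        intro h
        have h0 := congrArg (MvPolynomial.eval (fun _ : Fin p => (1:ℝ))) h
        simp only [map_mul, map_pow, MvPolynomial.eval_C, map_sum, MvPolynomial.eval_X,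
          map_zero, Finset.sum_const, Finset.card_univ, Fintype.card_fin, nsmul_eq_mul,
          mul_one] at h0
        have hppos : (0:ℝ) < p := by exact_mod_cast hp
        have : (0:ℝ) < (4:ℝ)^p * ((p:ℝ))^(4*p) := by positivity
        rw [h0] at this
        exact lt_irrefl 0 this
      have hlt : (MvPolynomial.C ((4:ℝ)^p) : MvPolynomial (Fin p) ℝ).totalDegree <
          (MvPolynomial.C ((4:ℝ)^p) * (∑ i, MvPolynomial.X i) ^ (4 * p) :
            MvPolynomial (Fin p) ℝ).totalDegree := by
        rw [MvPolynomial.totalDegree_C, hhom.totalDegree hne]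
        omega
      rw [MvPolynomial.totalDegree_add_eq_right_of_totalDegree_lt hlt, hhom.totalDegree hne]
  · -- coefficients nonneg
    intro m
    have hX : ∀ m', (0:ℝ) ≤ ((∑ i, MvPolynomial.X i : MvPolynomial (Fin p) ℝ)).coeff m' := by
      intro m'
      rw [MvPolynomial.coeff_sum]
      refine Finset.sum_nonneg fun i _ => ?_
      rw [MvPolynomial.coeff_X']
      positivity
    rw [MvPolynomial.coeff_add, MvPolynomial.coeff_C_mul, MvPolynomial.coeff_C]
    have := coeff_nonneg_pow _ hX (4 * p) m
    positivity
  · -- the inequality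
    intro n k l hk hkl
    obtain ⟨S, hS⟩ : ∃ S : ℝ, S = ∑ i, znorm (l i) := ⟨_, rfl⟩
    have hS0 : 0 ≤ S := by rw [hS]; exact Finset.sum_nonneg fun i _ => znorm_nonneg _
    have heval : MvPolynomial.eval (fun i => znorm (l i))
        (MvPolynomial.C ((4:ℝ)^p) + MvPolynomial.C ((4:ℝ)^p) *
          (∑ i, MvPolynomial.X i) ^ (4 * p)) = 4^p + 4^p * S ^ (4 * p) := by
      simp [hS]
    rw [heval]
    obtain ⟨Q, hQ⟩ : ∃ Q : ℝ, Q = ∏ i : Fin p, znorm (k + ∑ j ∈ Finset.Iic i, l j) ^ 2 :=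
      ⟨_, rfl⟩
    rw [← hQ]
    have hfac1 : ∀ i : Fin p, 1 ≤ znorm (k + ∑ j ∈ Finset.Iic i, l j) ^ 2 := by
      intro i
      apply one_le_znorm_sq
      intro h
      exact hkl i (eq_neg_of_add_eq_zero_left h)
    have hQpos : (0:ℝ) < Q := by
      rw [hQ]; exact Finset.prod_pos fun i _ => lt_of_lt_of_le one_pos (hfac1 i)
    have hk1 : (1:ℝ) ≤ znorm k := one_le_znorm hk
    have hKpos : (0:ℝ) < znorm k ^ (2 * p) := pow_pos (lt_of_lt_of_le one_pos hk1) _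
    -- key estimate
    have hkey : znorm k ^ (2 * p) ≤ Q * (1 + S) ^ (2 * p) := by
      have hper : ∀ i : Fin p, znorm k ^ 2 ≤
          znorm (k + ∑ j ∈ Finset.Iic i, l j) ^ 2 * (1 + S) ^ 2 := by
        intro i
        obtain ⟨m, hm⟩ : ∃ m, m = ∑ j ∈ Finset.Iic i, l j := ⟨_, rfl⟩
        have h1 : znorm k ≤ znorm (k + m) + znorm m := by
          have heqk : k = (k + m) + (-m) := by abel
          calc znorm k = znorm ((k + m) + (-m)) := by rw [← heqk]
            _ ≤ znorm (k + m) + znorm (-m) := znorm_add_le _ _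
            _ = znorm (k + m) + znorm m := by rw [znorm_neg]
        have h2 : znorm m ≤ S := by
          rw [hm, hS]
          calc znorm (∑ j ∈ Finset.Iic i, l j) ≤ ∑ j ∈ Finset.Iic i, znorm (l j) :=
              znorm_sum_le _ _
            _ ≤ ∑ j, znorm (l j) :=
              Finset.sum_le_sum_of_subset_of_nonneg (Finset.subset_univ _)
                (fun j _ _ => znorm_nonneg _)
        have h3 : (1:ℝ) ≤ znorm (k + m) := by
          rw [hm]
          nlinarith [hfac1 i, znorm_nonneg (k + ∑ j ∈ Finset.Iic i, l j)]
        have h4 : znorm k ≤ znorm (k + m) * (1 + S) := by nlinarith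
        rw [← hm]
        calc znorm k ^ 2 ≤ (znorm (k + m) * (1 + S)) ^ 2 :=
              pow_le_pow_left₀ (znorm_nonneg _) h4 2
          _ = znorm (k + m) ^ 2 * (1 + S) ^ 2 := by ring
      calc znorm k ^ (2 * p) = ∏ _i : Fin p, znorm k ^ 2 := by
            rw [Finset.prod_const, Finset.card_univ, Fintype.card_fin, ← pow_mul]
        _ ≤ ∏ i : Fin p, (znorm (k + ∑ j ∈ Finset.Iic i, l j) ^ 2 * (1 + S) ^ 2) :=
            Finset.prod_le_prod (fun i _ => by positivity) (fun i _ => hper i)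
        _ = Q * (1 + S) ^ (2 * p) := by
            rw [Finset.prod_mul_distrib, Finset.prod_const, Finset.card_univ, Fintype.card_fin,
              ← pow_mul, ← hQ]
    have hE : (1 + S) ^ (2 * p) ≤ 4^p + 4^p * S ^ (4 * p) := aux_hE p S hS0
    have hEpos : (0:ℝ) < (1 + S) ^ (2 * p) := by positivity
    have hstep : Q⁻¹ ≤ (znorm k ^ (2 * p))⁻¹ * (1 + S) ^ (2 * p) := by
      have h5 : (Q * (1 + S) ^ (2 * p))⁻¹ ≤ (znorm k ^ (2 * p))⁻¹ :=
        inv_anti₀ hKpos hkey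
      have h6 : Q⁻¹ = (Q * (1 + S) ^ (2 * p))⁻¹ * (1 + S) ^ (2 * p) := by
        field_simp
      rw [h6]
      exact mul_le_mul_of_nonneg_right h5 (le_of_lt hEpos)
    calc Q⁻¹ ≤ (znorm k ^ (2 * p))⁻¹ * (1 + S) ^ (2 * p) := hstep
      _ ≤ (znorm k ^ (2 * p))⁻¹ * (4^p + 4^p * S ^ (4 * p)) :=
          mul_le_mul_of_nonneg_left hE (by positivity)
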